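/- arXiv:2309.08593 — 9 statements merged into one kernel-verified Lean document; each statement's English description precedes it below -/
import Mathlib

section
/- For every k > 0 and every real x, |ReLU(x) - SiLU(kx)/k| ≤ 0.2785/k, where ReLU(x) = max(x,0) and SiLU(x) = x·σ(x). -/
noncomputable def sigmoid (x : ℝ) : ℝ := 1 / (1 + Real.exp (-x))
noncomputable def SiLU (x : ℝ) : ℝ := x * sigmoid x
noncomputable def ReLU (x : ℝ) : ℝ := max x 0

lemma key (y : ℝ) (hy : 0 ≤ y) : y / (Real.exp y + 1) ≤ 0.2785 := by
  have h := Real.sum_le_exp_of_nonneg hy 8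
  norm_num [Finset.sum_range_succ, Nat.factorial] at h
  rw [div_le_iff₀ (by positivity)]
  nlinarith [sq_nonneg (y - 1023/800),
    mul_nonneg hy (sq_nonneg (y - 1023/800)),
    mul_nonneg (pow_nonneg hy 2) (sq_nonneg (y - 1023/800)),
    mul_nonneg (pow_nonneg hy 3) (sq_nonneg (y - 1023/800)),
    mul_nonneg (pow_nonneg hy 4) (sq_nonneg (y - 1023/800)),
    mul_nonneg (pow_nonneg hy 5) (sq_nonneg (y - 1023/800))]

lemma main_bound (y : ℝ) : |ReLU y - SiLU y| ≤ 0.2785 := by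
  have hpos : (0:ℝ) < 1 + Real.exp (-y) := by positivity
  rcases le_or_gt 0 y with hy | hy
  · have hrel : ReLU y = y := max_eq_left hy
    have heq : ReLU y - SiLU y = y / (Real.exp y + 1) := by
      rw [hrel]
      unfold SiLU sigmoid
      rw [Real.exp_neg]
      have he : Real.exp y ≠ 0 := (Real.exp_pos y).ne'
      field_simp
      ring
    rw [heq, abs_of_nonneg (by positivity)]
    exact key y hy
  · have hrel : ReLU y = 0 := max_eq_right hy.le
    have heq : ReLU y - SiLU y = (-y) / (Real.exp (-y) + 1) := by
      rw [hrel, zero_sub]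
      unfold SiLU sigmoid
      rw [mul_one_div, ← neg_div, add_comm]
    rw [heq]
    have hny : 0 ≤ -y := by linarith
    rw [abs_of_nonneg (by positivity)]
    exact key (-y) hny

theorem relu_silu_approx (k : ℝ) (hk : 0 < k) (x : ℝ) :
    |ReLU x - SiLU (k * x) / k| ≤ 0.2785 / k := by
  have hrel : ReLU (k * x) = k * ReLU x := by
    unfold ReLU
    rw [max_comm (k*x), max_comm x, mul_max_of_nonneg _ _ hk.le, mul_zero]
  have : ReLU x - SiLU (k * x) / k = (ReLU (k * x) - SiLU (k * x)) / k := by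
    rw [hrel]; field_simp
  rw [this, abs_div, abs_of_pos hk, div_le_div_iff_of_pos_right hk]
  exact main_bound (k * x)
end

section
/- Let h be a masked attention head on M_{N,D} with parameters W_QK, W_OV and mask Λ. Define h' on M_{N+1,D+1} with parameters W_QK' = W_QK ⊕ [1], W_OV' = W_OV ⊕ [0], and mask Λ' = Λ ⊕ [1]. Then h'(X ⊕ [1]) = h(X) ⊕ [0] for all X ∈ M_{N,D}. -/
open Matrix

/-- Masked softmax: row-wise softmax restricted to the entries where the mask is 1. -/
noncomputable def msoftmax {ι : Type*} [Fintype ι] (A Λ : Matrix ι ι ℝ) : Matrix ι ι ℝ :=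
  Matrix.of fun i j => (Λ i j * Real.exp (A i j)) / ∑ k, Λ i k * Real.exp (A i k)

/-- A mask matrix: 0/1 entries with at least one 1 in every row. -/
def IsMask {ι : Type*} [Fintype ι] (Λ : Matrix ι ι ℝ) : Prop :=
  (∀ i j, Λ i j = 0 ∨ Λ i j = 1) ∧ ∀ i, ∃ j, Λ i j = 1

/-- A masked attention head with parameter matrices `WQK`, `WOV` and mask `Λ`. -/
noncomputable def attnHead {ι κ : Type*} [Fintype ι] [Fintype κ]
    (WQK WOV : Matrix κ κ ℝ) (Λ : Matrix ι ι ℝ) (X : Matrix ι κ ℝ) : Matrix ι κ ℝ :=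
  msoftmax (X * WQK * Xᵀ) Λ * X * WOV

lemma msoftmax_fromBlocks {m n : Type*} [Fintype m] [Fintype n]
    (A : Matrix m m ℝ) (B : Matrix n n ℝ) (Λ : Matrix m m ℝ) (M : Matrix n n ℝ) :
    msoftmax (fromBlocks A 0 0 B) (fromBlocks Λ 0 0 M) =
      fromBlocks (msoftmax A Λ) 0 0 (msoftmax B M) := by
  ext i j
  cases i with
  | inl i =>
    cases j with
    | inl j =>
      simp [msoftmax, fromBlocks, Fintype.sum_sum_type]
    | inr j =>
      simp [msoftmax, fromBlocks]
  | inr i =>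
    cases j with
    | inl j =>
      simp [msoftmax, fromBlocks]
    | inr j =>
      simp [msoftmax, fromBlocks, Fintype.sum_sum_type]

lemma msoftmax_one : msoftmax (1 : Matrix (Fin 1) (Fin 1) ℝ) 1 = 1 := by
  ext i j
  fin_cases i; fin_cases j
  simp [msoftmax]

theorem attnHead_extend {N D : ℕ}
    (WQK WOV : Matrix (Fin D) (Fin D) ℝ) (Λ : Matrix (Fin N) (Fin N) ℝ)
    (hΛ : IsMask Λ) (X : Matrix (Fin N) (Fin D) ℝ) :
    attnHead (fromBlocks WQK 0 0 (1 : Matrix (Fin 1) (Fin 1) ℝ))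
        (fromBlocks WOV 0 0 (0 : Matrix (Fin 1) (Fin 1) ℝ))
        (fromBlocks Λ 0 0 (1 : Matrix (Fin 1) (Fin 1) ℝ))
        (fromBlocks X 0 0 (1 : Matrix (Fin 1) (Fin 1) ℝ)) =
      fromBlocks (attnHead WQK WOV Λ X) 0 0 (0 : Matrix (Fin 1) (Fin 1) ℝ) := by
  rw [attnHead, fromBlocks_transpose, fromBlocks_multiply, fromBlocks_multiply]
  simp only [Matrix.mul_zero, Matrix.zero_mul, Matrix.mul_one, Matrix.one_mul,
    add_zero, zero_add, transpose_zero, transpose_one]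
  rw [msoftmax_fromBlocks, msoftmax_one, fromBlocks_multiply, fromBlocks_multiply]
  simp [attnHead]
end

section
/- Single-neuron MLP as attention head: let v₁ ∈ ℝ^D (column vector), v₂ ∈ ℝ^D (row vector), and define f(X) = SiLU(X v₁) v₂ for X ∈ M_{N,D}, with SiLU applied entrywise. Define the attention head h on M_{N+1,D+1} with W_QK the block matrix with top-right block −v₁ and zeros elsewhere, W_OV = (v₁ v₂) ⊕ [0], and mask Λ with blocks [I_N, 𝟏; 0, 1] (each of the first N tokens attends to itself and the last token; the last token attends only to itself). Then h(X ⊕ [1]) = f(X) ⊕ [0] for all X ∈ M_{N,D}. -/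
open Matrix

lemma msoftmax_block {N : ℕ} (a : Fin N → ℝ) :
    msoftmax (fromBlocks 0 (Matrix.of fun n (_ : Fin 1) => -(a n)) 0 0)
      (fromBlocks (1 : Matrix (Fin N) (Fin N) ℝ)
        (Matrix.of fun _ (_ : Fin 1) => (1 : ℝ)) 0 (1 : Matrix (Fin 1) (Fin 1) ℝ)) =
    fromBlocks (diagonal fun n => sigmoid (a n))
      (Matrix.of fun n (_ : Fin 1) => Real.exp (-(a n)) * sigmoid (a n)) 0 1 := by
  have hpos : ∀ n, (0:ℝ) < 1 + Real.exp (-(a n)) := fun n => by positivity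
  ext i j
  cases i with
  | inl i =>
    cases j with
    | inl j =>
      simp [msoftmax, Fintype.sum_sum_type, one_apply, Finset.sum_ite_eq, diagonal, sigmoid]
      split <;> simp
    | inr j =>
      simp [msoftmax, Fintype.sum_sum_type, one_apply, Finset.sum_ite_eq, sigmoid, div_eq_mul_inv]
  | inr i =>
    cases j with
    | inl j =>
      simp [msoftmax, Fintype.sum_sum_type, one_apply, Finset.sum_ite_eq]
    | inr j =>
      simp [msoftmax, Fintype.sum_sum_type, one_apply, Finset.sum_ite_eq, Fin.fin_one_eq_zero]

theorem neuron_as_attnHead {N D : ℕ} (v₁ v₂ : Fin D → ℝ)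
    (X : Matrix (Fin N) (Fin D) ℝ) :
    attnHead
        (fromBlocks 0 (Matrix.of fun d (_ : Fin 1) => -v₁ d) 0 0)
        (fromBlocks (vecMulVec v₁ v₂) 0 0 (0 : Matrix (Fin 1) (Fin 1) ℝ))
        (fromBlocks (1 : Matrix (Fin N) (Fin N) ℝ)
          (Matrix.of fun _ (_ : Fin 1) => (1 : ℝ)) 0 (1 : Matrix (Fin 1) (Fin 1) ℝ))
        (fromBlocks X 0 0 (1 : Matrix (Fin 1) (Fin 1) ℝ)) =
      fromBlocks (vecMulVec (fun n => SiLU (X.mulVec v₁ n)) v₂) 0 0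
        (0 : Matrix (Fin 1) (Fin 1) ℝ) := by
  unfold attnHead
  have hA : (fromBlocks X 0 0 (1 : Matrix (Fin 1) (Fin 1) ℝ) : Matrix (Fin N ⊕ Fin 1) (Fin D ⊕ Fin 1) ℝ) *
      (fromBlocks 0 (Matrix.of fun d (_ : Fin 1) => -v₁ d) 0 0 : Matrix (Fin D ⊕ Fin 1) (Fin D ⊕ Fin 1) ℝ) *
      (fromBlocks X 0 0 (1 : Matrix (Fin 1) (Fin 1) ℝ))ᵀ =
      fromBlocks 0 (Matrix.of fun n (_ : Fin 1) => -(X.mulVec v₁ n)) 0 0 := by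
    rw [fromBlocks_transpose, fromBlocks_multiply, fromBlocks_multiply, fromBlocks_inj]
    refine ⟨by simp, ?_, by simp, by simp⟩
    ext n j
    simp [Matrix.mul_apply, mulVec, dotProduct, Finset.sum_neg_distrib]
  rw [hA, msoftmax_block, fromBlocks_multiply, fromBlocks_multiply, fromBlocks_inj]
  refine ⟨?_, by simp, by simp, by simp⟩
  · ext n j
    simp [Matrix.mul_apply, vecMulVec_apply, diagonal, Finset.mul_sum, SiLU, mulVec, dotProduct,
      Finset.sum_mul]
    congr 1 with k
    ring
end

section
/- With the mask Λ = [I_N, 𝟏; 0, 1] and W_QK having top-right block −v₁ and zeros elsewhere, the attention pattern msoftmax((X ⊕ [1]) W_QK (X ⊕ [1])ᵀ, Λ) equals the matrix with blocks [diag(σ(X v₁)), σ(−X v₁); 0, 1], where σ is applied entrywise. -/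
open Matrix

theorem neuron_attention_pattern {N D : ℕ} (v₁ : Fin D → ℝ)
    (X : Matrix (Fin N) (Fin D) ℝ) :
    msoftmax
        ((fromBlocks X 0 0 (1 : Matrix (Fin 1) (Fin 1) ℝ)) *
          (fromBlocks 0 (Matrix.of fun d (_ : Fin 1) => -v₁ d) 0 0 : Matrix (Fin D ⊕ Fin 1) (Fin D ⊕ Fin 1) ℝ) *
          (fromBlocks X 0 0 (1 : Matrix (Fin 1) (Fin 1) ℝ))ᵀ)
        (fromBlocks (1 : Matrix (Fin N) (Fin N) ℝ)
          (Matrix.of fun _ (_ : Fin 1) => (1 : ℝ)) 0 (1 : Matrix (Fin 1) (Fin 1) ℝ)) =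
      fromBlocks (Matrix.diagonal fun n => sigmoid (X.mulVec v₁ n))
        (Matrix.of fun n (_ : Fin 1) => sigmoid (-(X.mulVec v₁ n))) 0
        (1 : Matrix (Fin 1) (Fin 1) ℝ) := by
  have hA : (fromBlocks X 0 0 (1 : Matrix (Fin 1) (Fin 1) ℝ)) *
      (fromBlocks 0 (Matrix.of fun d (_ : Fin 1) => -v₁ d) 0 0 : Matrix (Fin D ⊕ Fin 1) (Fin D ⊕ Fin 1) ℝ) *
      (fromBlocks X 0 0 (1 : Matrix (Fin 1) (Fin 1) ℝ))ᵀ =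
      fromBlocks 0 (Matrix.of fun n (_ : Fin 1) => -(X.mulVec v₁ n)) 0 0 := by
    rw [fromBlocks_transpose, fromBlocks_multiply, fromBlocks_multiply]
    congr 1 <;> try simp
    ext n j
    simp [Matrix.mul_apply, Matrix.mulVec, dotProduct, mul_neg, Finset.sum_neg_distrib]
  rw [hA]
  have hpos : ∀ a : ℝ, 1 + Real.exp (-a) ≠ 0 := fun a =>
    ne_of_gt (by positivity)
  ext i j
  rcases i with n | i <;> rcases j with m | j <;>
    simp [msoftmax, Fintype.sum_sum_type, fromBlocks, one_apply, sigmoid,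
      apply_ite Real.exp, Finset.sum_ite_eq, mul_ite]
  · split <;> simp_all [Matrix.diagonal]
  · rw [Real.exp_neg] at *
    have h1 : (0:ℝ) < Real.exp (X.mulVec v₁ n) := Real.exp_pos _
    field_simp
    ring
  · simp [Fin.eq_zero i, Fin.eq_zero j]
end

section
/- An MLP layer with generalized SiLU activation equals a sum of ℓ attention heads: for f(X) = α(X V₁) V₂ with α(x) = a₁ SiLU(a₂ x), V₁ ∈ M_{D,ℓ}, V₂ ∈ M_{ℓ,D}, there exist masked attention heads h₁,…,h_ℓ on M_{N+1,D+1} (each with internal rank-1 W_QK and W_OV, and mask [I_N, 𝟏; 0, 1]) such that f(X) ⊕ [0] = Σᵢ hᵢ(X ⊕ [1]) for all X ∈ M_{N,D}. -/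
open Matrix

lemma msoftmax_key {N : ℕ} (c : Fin N → ℝ) :
    msoftmax (fromBlocks 0 (Matrix.of fun n (_ : Fin 1) => c n) 0 0)
      (fromBlocks (1 : Matrix (Fin N) (Fin N) ℝ) (Matrix.of fun _ (_ : Fin 1) => (1:ℝ)) 0
        (1 : Matrix (Fin 1) (Fin 1) ℝ)) =
    fromBlocks (Matrix.of fun n m => if n = m then (1 + Real.exp (c n))⁻¹ else 0)
      (Matrix.of fun n (_ : Fin 1) => Real.exp (c n) * (1 + Real.exp (c n))⁻¹) 0 1 := by
  have hpos : ∀ n, (0:ℝ) < 1 + Real.exp (c n) := fun n => by positivity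
  have hden : ∀ (n : Fin N),
      (∑ k : Fin N ⊕ Fin 1,
        fromBlocks (1 : Matrix (Fin N) (Fin N) ℝ) (Matrix.of fun _ (_ : Fin 1) => (1:ℝ)) 0
          (1 : Matrix (Fin 1) (Fin 1) ℝ) (Sum.inl n) k *
        Real.exp (fromBlocks (0 : Matrix (Fin N) (Fin N) ℝ) (Matrix.of fun n (_ : Fin 1) => c n)
          (0 : Matrix (Fin 1) (Fin N) ℝ) (0 : Matrix (Fin 1) (Fin 1) ℝ) (Sum.inl n) k)) =
      1 + Real.exp (c n) := by
    intro n
    simp [Fintype.sum_sum_type, fromBlocks, one_apply, apply_ite, Finset.sum_ite_eq]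
  ext i j
  rcases i with n | n <;> rcases j with m | m
  · simp only [msoftmax, of_apply, hden, fromBlocks_apply₁₁, fromBlocks_apply₁₂, of_apply,
      one_apply]
    split_ifs <;> simp
  · simp only [msoftmax, of_apply, hden, fromBlocks_apply₁₂, of_apply]
    rw [one_mul, div_eq_mul_inv]
  · simp [msoftmax, fromBlocks]
  · have hm : m = 0 := Subsingleton.elim _ _
    have hn : n = 0 := Subsingleton.elim _ _
    subst hm hn
    simp [msoftmax, fromBlocks, Fintype.sum_sum_type, one_apply]

lemma attn_key {N D : ℕ} (a₁ a₂ : ℝ) (v w : Fin D → ℝ) (X : Matrix (Fin N) (Fin D) ℝ) :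
    attnHead (a₂ • fromBlocks 0 (Matrix.of fun d (_ : Fin 1) => -v d) 0 0)
      (fromBlocks ((a₁ * a₂) • vecMulVec v w) 0 0 (0 : Matrix (Fin 1) (Fin 1) ℝ))
      (fromBlocks (1 : Matrix (Fin N) (Fin N) ℝ) (Matrix.of fun _ (_ : Fin 1) => (1:ℝ)) 0
        (1 : Matrix (Fin 1) (Fin 1) ℝ))
      (fromBlocks X 0 0 (1 : Matrix (Fin 1) (Fin 1) ℝ)) =
    fromBlocks (Matrix.of fun n d => a₁ * SiLU (a₂ * ∑ k, X n k * v k) * w d) 0 0 0 := by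
  set z : Fin N → ℝ := fun n => ∑ k, X n k * v k with hz
  have hA : (fromBlocks X 0 0 (1 : Matrix (Fin 1) (Fin 1) ℝ) :
        Matrix (Fin N ⊕ Fin 1) (Fin D ⊕ Fin 1) ℝ) *
      (a₂ • fromBlocks 0 (Matrix.of fun d (_ : Fin 1) => -v d) 0 0 :
        Matrix (Fin D ⊕ Fin 1) (Fin D ⊕ Fin 1) ℝ) *
      (fromBlocks X 0 0 (1 : Matrix (Fin 1) (Fin 1) ℝ))ᵀ =
      fromBlocks 0 (Matrix.of fun n (_ : Fin 1) => -(a₂ * z n)) 0 0 := by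
    rw [Matrix.mul_smul, Matrix.smul_mul, fromBlocks_transpose, fromBlocks_multiply,
      fromBlocks_multiply]
    simp only [Matrix.mul_zero, Matrix.zero_mul, add_zero, zero_add, Matrix.mul_one,
      transpose_zero, Matrix.one_mul]
    ext i j
    rcases i with n | n <;> rcases j with m | m <;>
      simp [fromBlocks, mul_apply, Finset.mul_sum, mul_comm, hz]
  rw [attnHead, hA, msoftmax_key]
  rw [fromBlocks_multiply, fromBlocks_multiply]
  simp only [Matrix.mul_zero, Matrix.zero_mul, add_zero, zero_add, Matrix.mul_one,
    Matrix.one_mul]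
  ext i j
  rcases i with n | n <;> rcases j with m | m
  · have hpos : (0:ℝ) < 1 + Real.exp (-(a₂ * z n)) := by positivity
    simp only [fromBlocks_apply₁₁, of_apply, mul_apply, vecMulVec_apply, Matrix.smul_apply,
      smul_eq_mul]
    have h1 : ∀ d : Fin D, (∑ k : Fin N,
        (if n = k then (1 + Real.exp (-(a₂ * z n)))⁻¹ else 0) * X k d) =
        (1 + Real.exp (-(a₂ * z n)))⁻¹ * X n d := by
      intro d
      simp [ite_mul, Finset.sum_ite_eq]
    simp only [h1]
    rw [SiLU, sigmoid]
    have h2 : (∑ d, (1 + Real.exp (-(a₂ * z n)))⁻¹ * X n d * (a₁ * a₂ * (v d * w m))) =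
        ∑ d, (1 + Real.exp (-(a₂ * z n)))⁻¹ * (a₁ * a₂ * w m) * (X n d * v d) :=
      Finset.sum_congr rfl fun d _ => by ring
    have hzn : (∑ k : Fin D, X n k * v k) = z n := rfl
    rw [h2, ← Finset.mul_sum, hzn]
    field_simp
  · simp [fromBlocks]
  · simp [fromBlocks]
  · simp [fromBlocks]

theorem mlp_as_sum_of_attnHeads {N D l : ℕ} (a₁ a₂ : ℝ)
    (V₁ : Matrix (Fin D) (Fin l) ℝ) (V₂ : Matrix (Fin l) (Fin D) ℝ)
    (X : Matrix (Fin N) (Fin D) ℝ) :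
    fromBlocks ((X * V₁).map (fun x => a₁ * SiLU (a₂ * x)) * V₂) 0 0
        (0 : Matrix (Fin 1) (Fin 1) ℝ) =
      ∑ i : Fin l,
        attnHead
          (a₂ • fromBlocks 0 (Matrix.of fun d (_ : Fin 1) => -V₁ d i) 0 0)
          (fromBlocks ((a₁ * a₂) • vecMulVec (fun d => V₁ d i) (V₂ i)) 0 0
            (0 : Matrix (Fin 1) (Fin 1) ℝ))
          (fromBlocks (1 : Matrix (Fin N) (Fin N) ℝ)
            (Matrix.of fun _ (_ : Fin 1) => (1 : ℝ)) 0 (1 : Matrix (Fin 1) (Fin 1) ℝ))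
          (fromBlocks X 0 0 (1 : Matrix (Fin 1) (Fin 1) ℝ)) := by
  have h : ∀ i : Fin l,
      attnHead
        (a₂ • fromBlocks 0 (Matrix.of fun d (_ : Fin 1) => -V₁ d i) 0 0)
        (fromBlocks ((a₁ * a₂) • vecMulVec (fun d => V₁ d i) (V₂ i)) 0 0
          (0 : Matrix (Fin 1) (Fin 1) ℝ))
        (fromBlocks (1 : Matrix (Fin N) (Fin N) ℝ)
          (Matrix.of fun _ (_ : Fin 1) => (1 : ℝ)) 0 (1 : Matrix (Fin 1) (Fin 1) ℝ))
        (fromBlocks X 0 0 (1 : Matrix (Fin 1) (Fin 1) ℝ)) =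
      fromBlocks (Matrix.of fun n d => a₁ * SiLU (a₂ * ∑ k, X n k * V₁ k i) * V₂ i d) 0 0 0 :=
    fun i => attn_key a₁ a₂ (fun d => V₁ d i) (V₂ i) X
  rw [Finset.sum_congr rfl fun i _ => h i]
  ext p q
  rw [Matrix.sum_apply]
  rcases p with n | n <;> rcases q with d | d
  · simp [mul_apply, map_apply]
  · simp
  · simp
  · simp
end

section
/- Entrywise activation via attention heads: for a generalized SiLU function α(x) = a₁ SiLU(a₂ x), there exist D masked attention heads h₁,…,h_D on M_{N+1,D+1} such that α(X) ⊕ [0] = Σ_{i=1}^D hᵢ(X ⊕ [1]) for all X ∈ M_{N,D}, where α is applied entrywise. -/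
open Matrix

lemma head_eq {N D : ℕ} (a₁ a₂ : ℝ) (i : Fin D) (X : Matrix (Fin N) (Fin D) ℝ) :
    attnHead
      (Matrix.of fun c c' => if c = Sum.inl i ∧ c' = Sum.inr (0 : Fin 1) then -a₂ else 0)
      (Matrix.of fun c c' => if c = Sum.inl i ∧ c' = Sum.inl i then a₁ * a₂ else 0)
      (fromBlocks (1 : Matrix (Fin N) (Fin N) ℝ)
        (Matrix.of fun _ (_ : Fin 1) => (1 : ℝ)) 0 (1 : Matrix (Fin 1) (Fin 1) ℝ))
      (fromBlocks X 0 0 (1 : Matrix (Fin 1) (Fin 1) ℝ)) =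
    fromBlocks
      (Matrix.of fun j k => if k = i then a₁ * a₂ * X j i / (1 + Real.exp (-(a₂ * X j i))) else 0)
      0 0 (0 : Matrix (Fin 1) (Fin 1) ℝ) := by
  set Z := fromBlocks X 0 0 (1 : Matrix (Fin 1) (Fin 1) ℝ) with hZ
  have hA : Z * (Matrix.of fun c c' => if c = Sum.inl i ∧ c' = Sum.inr (0 : Fin 1) then -a₂ else 0 : Matrix (Fin D ⊕ Fin 1) (Fin D ⊕ Fin 1) ℝ) * Zᵀ =
      fromBlocks 0 (Matrix.of fun j (_ : Fin 1) => -(a₂ * X j i)) 0 (0 : Matrix (Fin 1) (Fin 1) ℝ) := by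
    ext r s
    simp only [Matrix.mul_apply, Matrix.transpose_apply, Matrix.of_apply, hZ]
    rcases r with j | r <;> rcases s with k | s <;>
      simp [Fintype.sum_sum_type, Fin.sum_univ_one, fromBlocks, Matrix.of_apply,
        mul_ite, ite_mul, Finset.sum_ite_eq', mul_comm, Fin.fin_one_eq_zero]
  unfold attnHead
  rw [hA]
  ext r s
  rcases r with j | r <;> rcases s with k | s <;>
    simp only [Matrix.mul_apply, msoftmax, Matrix.of_apply, fromBlocks, Sum.elim_inl,
        Sum.elim_inr, Fintype.sum_sum_type, Fin.sum_univ_one, Matrix.one_apply,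
        Matrix.zero_apply, Real.exp_zero] <;>
    simp [mul_ite, ite_mul, Finset.sum_ite_eq', Matrix.one_apply, Fin.fin_one_eq_zero]
  · by_cases hk : k = i <;>
      simp [hZ, fromBlocks, hk, ite_and, div_mul_eq_mul_div, ite_mul, ite_div,
        Finset.sum_ite_eq', mul_comm, mul_assoc, mul_left_comm, div_eq_mul_inv]
  · simp [hZ, fromBlocks, ite_and, ite_mul]

theorem activation_via_attnHeads {N D : ℕ} (a₁ a₂ : ℝ) :
    ∃ WQK WOV : Fin D → Matrix (Fin D ⊕ Fin 1) (Fin D ⊕ Fin 1) ℝ,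
      ∀ X : Matrix (Fin N) (Fin D) ℝ,
        fromBlocks (X.map (fun x => a₁ * SiLU (a₂ * x))) 0 0
            (0 : Matrix (Fin 1) (Fin 1) ℝ) =
          ∑ i : Fin D,
            attnHead (WQK i) (WOV i)
              (fromBlocks (1 : Matrix (Fin N) (Fin N) ℝ)
                (Matrix.of fun _ (_ : Fin 1) => (1 : ℝ)) 0 (1 : Matrix (Fin 1) (Fin 1) ℝ))
              (fromBlocks X 0 0 (1 : Matrix (Fin 1) (Fin 1) ℝ)) := by
  refine ⟨fun i => Matrix.of fun c c' => if c = Sum.inl i ∧ c' = Sum.inr (0 : Fin 1) then -a₂ else 0,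
    fun i => Matrix.of fun c c' => if c = Sum.inl i ∧ c' = Sum.inl i then a₁ * a₂ else 0,
    fun X => ?_⟩
  have := fun i => head_eq (N := N) a₁ a₂ i X
  simp only [this]
  ext r s
  rcases r with j | r <;> rcases s with k | s <;>
    simp [Matrix.sum_apply, fromBlocks, Finset.sum_ite_eq, SiLU, sigmoid,
      div_eq_mul_inv, mul_assoc, mul_comm, mul_left_comm]
end

section
/- Pseudo-masking attention concentration (off-mask case): let A ∈ M_{N,N} with all entries bounded in absolute value by b, let Λ₁ ≤ Λ₂ be 0-1 mask matrices (each row of Λ₁ has a 1), and let Ω > ln(N/ε₀) + 2b. Then every entry (i,j) with Λ₁_{ij} = 0 of P := msoftmax(A + Ω Λ₁, Λ₂) satisfies P_{ij} < ε₀/N. -/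
open Matrix

theorem pseudo_masking_offmask {N : ℕ} (A Λ₁ Λ₂ : Matrix (Fin N) (Fin N) ℝ)
    (b ε₀ Ω : ℝ) (hb : 0 ≤ b) (hε₀ : 0 < ε₀)
    (hA : ∀ i j, |A i j| ≤ b)
    (h₁ : IsMask Λ₁) (h₂ : IsMask Λ₂) (hle : ∀ i j, Λ₁ i j ≤ Λ₂ i j)
    (hΩ : Real.log (N / ε₀) + 2 * b < Ω) :
    ∀ i j, Λ₁ i j = 0 →
      msoftmax (A + Ω • Λ₁) Λ₂ i j < ε₀ / N := by
  intro i j hΛ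
  have hNpos : 0 < N := i.pos
  have hN : (0:ℝ) < N := by exact_mod_cast hNpos
  have hεN : 0 < ε₀ / N := by positivity
  set B := A + Ω • Λ₁ with hB
  obtain ⟨k₀, hk₀⟩ := h₁.2 i
  have hΛ₂k₀ : Λ₂ i k₀ = 1 := by
    have h := hle i k₀
    rcases h₂.1 i k₀ with h0 | h1
    · rw [hk₀, h0] at h; linarith
    · exact h1
  have hterm : ∀ k, 0 ≤ Λ₂ i k * Real.exp (B i k) := by
    intro k
    rcases h₂.1 i k with h0 | h1
    · simp [h0]
    · simp [h1, (Real.exp_pos _).le]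
  have hD : Real.exp (Ω - b) ≤ ∑ k, Λ₂ i k * Real.exp (B i k) := by
    calc Real.exp (Ω - b) ≤ Λ₂ i k₀ * Real.exp (B i k₀) := by
          rw [hΛ₂k₀, one_mul]
          apply Real.exp_le_exp.2
          have hBk : B i k₀ = A i k₀ + Ω := by
            simp [hB, Matrix.add_apply, hk₀]
          rw [hBk]
          have := abs_le.1 (hA i k₀)
          linarith [this.1]
      _ ≤ ∑ k, Λ₂ i k * Real.exp (B i k) :=
          Finset.single_le_sum (fun k _ => hterm k) (Finset.mem_univ k₀)
  have hDpos : 0 < ∑ k, Λ₂ i k * Real.exp (B i k) :=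
    lt_of_lt_of_le (Real.exp_pos _) hD
  have hmid : Real.exp b < ε₀ / N * Real.exp (Ω - b) := by
    have hεNexp : ε₀ / N = Real.exp (Real.log (ε₀ / N)) := (Real.exp_log hεN).symm
    rw [hεNexp, ← Real.exp_add]
    apply Real.exp_lt_exp.2
    have hlog : Real.log (ε₀ / N) = - Real.log ((N:ℝ) / ε₀) := by
      rw [Real.log_div hε₀.ne' hN.ne', Real.log_div hN.ne' hε₀.ne']
      ring
    rw [hlog]; linarith
  rcases h₂.1 i j with h0 | h1
  · simp only [msoftmax, Matrix.of_apply, h0, zero_mul, zero_div]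
    exact hεN
  · show Λ₂ i j * Real.exp (B i j) / ∑ k, Λ₂ i k * Real.exp (B i k) < ε₀ / N
    rw [div_lt_iff₀ hDpos]
    have hnum : Λ₂ i j * Real.exp (B i j) ≤ Real.exp b := by
      rw [h1, one_mul]
      apply Real.exp_le_exp.2
      have hBj : B i j = A i j := by simp [hB, Matrix.add_apply, hΛ]
      rw [hBj]
      exact (abs_le.1 (hA i j)).2
    calc Λ₂ i j * Real.exp (B i j) ≤ Real.exp b := hnum
      _ < ε₀ / N * Real.exp (Ω - b) := hmid
      _ ≤ ε₀ / N * ∑ k, Λ₂ i k * Real.exp (B i k) :=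
          mul_le_mul_of_nonneg_left hD hεN.le
end

section
/- Pseudo-masking attention concentration (on-mask case): under the same hypotheses (entries of A bounded by b, Λ₁ ≤ Λ₂ masks, Ω > ln(N/ε₀) + 2b), for each row i the entries of P = msoftmax(A + ΩΛ₁, Λ₂) at positions j with Λ₁_{ij} = 1 sum to some S ∈ [1−ε₀, 1] and are proportional to the corresponding entries of msoftmax(A, Λ₁); hence |P_{ij} − msoftmax(A, Λ₁)_{ij}| ≤ ε₀ for all i,j. -/
open Matrix

theorem pseudo_masking_onmask {N : ℕ} (A Λ₁ Λ₂ : Matrix (Fin N) (Fin N) ℝ)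
    (b ε₀ Ω : ℝ) (hb : 0 ≤ b) (hε₀ : 0 < ε₀)
    (hA : ∀ i j, |A i j| ≤ b)
    (h₁ : IsMask Λ₁) (h₂ : IsMask Λ₂) (hle : ∀ i j, Λ₁ i j ≤ Λ₂ i j)
    (hΩ : Real.log (N / ε₀) + 2 * b < Ω) :
    (∀ i, ∃ S : ℝ, 1 - ε₀ ≤ S ∧ S ≤ 1 ∧
        (∑ j ∈ Finset.univ.filter (fun j => Λ₁ i j = 1),
            msoftmax (A + Ω • Λ₁) Λ₂ i j) = S ∧
        ∀ j, Λ₁ i j = 1 →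
          msoftmax (A + Ω • Λ₁) Λ₂ i j = S * msoftmax A Λ₁ i j) ∧
    ∀ i j, |msoftmax (A + Ω • Λ₁) Λ₂ i j - msoftmax A Λ₁ i j| ≤ ε₀ := by
  have key : ∀ i : Fin N, ∃ S : ℝ,
      (1 - ε₀ ≤ S ∧ S ≤ 1 ∧
        (∑ j ∈ Finset.univ.filter (fun j => Λ₁ i j = 1),
            msoftmax (A + Ω • Λ₁) Λ₂ i j) = S ∧
        ∀ j, Λ₁ i j = 1 → msoftmax (A + Ω • Λ₁) Λ₂ i j = S * msoftmax A Λ₁ i j) ∧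
      ∀ j, |msoftmax (A + Ω • Λ₁) Λ₂ i j - msoftmax A Λ₁ i j| ≤ ε₀ := by
    intro i
    have hNpos : 0 < (N : ℝ) := by exact_mod_cast i.pos
    have hmask2 : ∀ j, Λ₁ i j = 1 → Λ₂ i j = 1 := by
      intro j hj
      rcases h₂.1 i j with h | h
      · have := hle i j; rw [hj, h] at this; linarith
      · exact h
    set D₁ := ∑ k, Λ₁ i k * Real.exp (A i k) with hD₁def
    set D₂ := ∑ k, Λ₂ i k * Real.exp ((A + Ω • Λ₁) i k) with hD₂def
    set R := ∑ k, (Λ₂ i k - Λ₁ i k) * Real.exp (A i k) with hRdef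
    have hentry : ∀ k, (A + Ω • Λ₁) i k = A i k + Ω * Λ₁ i k := by
      intro k; simp [Matrix.add_apply, Matrix.smul_apply, smul_eq_mul]
    have hsplit : D₂ = Real.exp Ω * D₁ + R := by
      rw [hD₂def, hD₁def, hRdef, Finset.mul_sum, ← Finset.sum_add_distrib]
      apply Finset.sum_congr rfl
      intro k _
      rcases h₁.1 i k with h | h
      · simp [hentry, h]
      · have h2 := hmask2 k h
        simp [hentry, h, h2, Real.exp_add]
        ring
    have hR0 : 0 ≤ R := by
      apply Finset.sum_nonneg
      intro k _
      have := hle i k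
      exact mul_nonneg (by linarith) (Real.exp_pos _).le
    obtain ⟨j₀, hj₀⟩ := h₁.2 i
    have htermnn : ∀ k ∈ Finset.univ, 0 ≤ Λ₁ i k * Real.exp (A i k) := by
      intro k _
      rcases h₁.1 i k with h | h <;> simp [h] <;> positivity
    have hD₁lb : Real.exp (A i j₀) ≤ D₁ := by
      have := Finset.single_le_sum htermnn (Finset.mem_univ j₀)
      simpa [hj₀] using this
    have hD₁pos : 0 < D₁ := lt_of_lt_of_le (Real.exp_pos _) hD₁lb
    have hD₁lb' : Real.exp (-b) ≤ D₁ := by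
      refine le_trans (Real.exp_le_exp.mpr ?_) hD₁lb
      have := abs_le.mp (hA i j₀)
      linarith [this.1]
    have hRub : R ≤ N * Real.exp b := by
      rw [hRdef]
      calc ∑ k, (Λ₂ i k - Λ₁ i k) * Real.exp (A i k)
          ≤ ∑ _k : Fin N, Real.exp b := by
            apply Finset.sum_le_sum
            intro k _
            have h1 : Λ₂ i k - Λ₁ i k ≤ 1 := by
              rcases h₂.1 i k with h | h <;> rcases h₁.1 i k with h' | h' <;>
                simp [h, h'] <;> norm_num
            have h2 : 0 ≤ Λ₂ i k - Λ₁ i k := by linarith [hle i k]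
            have h3 : Real.exp (A i k) ≤ Real.exp b :=
              Real.exp_le_exp.mpr (abs_le.mp (hA i k)).2
            calc (Λ₂ i k - Λ₁ i k) * Real.exp (A i k) ≤ 1 * Real.exp b := by
                  apply mul_le_mul h1 h3 (Real.exp_pos _).le (by norm_num)
              _ = Real.exp b := one_mul _
        _ = N * Real.exp b := by simp [Finset.sum_const, nsmul_eq_mul]
    have hD₂pos : 0 < D₂ := by
      rw [hsplit]
      have := mul_pos (Real.exp_pos Ω) hD₁pos
      linarith
    have hexpΩ : (N / ε₀) * Real.exp (2 * b) ≤ Real.exp Ω := by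
      have h1 : Real.exp (Real.log (N / ε₀) + 2 * b) ≤ Real.exp Ω :=
        (Real.exp_le_exp.mpr hΩ.le)
      rwa [Real.exp_add, Real.exp_log (by positivity)] at h1
    set S := Real.exp Ω * D₁ / D₂ with hSdef
    have hS1 : S ≤ 1 := by
      rw [hSdef, div_le_one hD₂pos, hsplit]
      linarith
    have hRD : R ≤ ε₀ * D₂ := by
      have he : Real.exp (2 * b) * Real.exp (-b) = Real.exp b := by
        rw [← Real.exp_add]; ring_nf
      have hc1 : (N : ℝ) * Real.exp b = ε₀ * ((N / ε₀) * Real.exp (2 * b) * Real.exp (-b)) := by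
        rw [mul_assoc, he]
        field_simp
      calc R ≤ N * Real.exp b := hRub
        _ = ε₀ * ((N / ε₀) * Real.exp (2 * b) * Real.exp (-b)) := hc1
        _ ≤ ε₀ * (Real.exp Ω * Real.exp (-b)) := by
            apply mul_le_mul_of_nonneg_left _ hε₀.le
            exact mul_le_mul_of_nonneg_right hexpΩ (Real.exp_pos _).le
        _ ≤ ε₀ * (Real.exp Ω * D₁) := by
            apply mul_le_mul_of_nonneg_left _ hε₀.le
            exact mul_le_mul_of_nonneg_left hD₁lb' (Real.exp_pos _).le
        _ ≤ ε₀ * D₂ := by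
            apply mul_le_mul_of_nonneg_left _ hε₀.le
            rw [hsplit]; linarith
    have h1S : 1 - S = R / D₂ := by
      rw [hSdef]
      field_simp
      rw [hsplit]; ring
    have hRDdiv : R / D₂ ≤ ε₀ := (div_le_iff₀ hD₂pos).mpr hRD
    have hSlb : 1 - ε₀ ≤ S := by linarith [h1S ▸ hRDdiv]
    have hP : ∀ j, msoftmax (A + Ω • Λ₁) Λ₂ i j
        = Λ₂ i j * Real.exp ((A + Ω • Λ₁) i j) / D₂ := fun j => rfl
    have hQ : ∀ j, msoftmax A Λ₁ i j = Λ₁ i j * Real.exp (A i j) / D₁ := fun j => rfl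
    have hPeq : ∀ j, Λ₁ i j = 1 → msoftmax (A + Ω • Λ₁) Λ₂ i j = S * msoftmax A Λ₁ i j := by
      intro j hj
      rw [hP, hQ, hSdef, hentry, hj, hmask2 j hj]
      rw [Real.exp_add]
      field_simp
    have hQsum : ∑ j ∈ Finset.univ.filter (fun j => Λ₁ i j = 1), msoftmax A Λ₁ i j = 1 := by
      have hsub : ∑ j ∈ Finset.univ.filter (fun j => Λ₁ i j = 1),
          Λ₁ i j * Real.exp (A i j) = D₁ := by
        rw [hD₁def]
        apply Finset.sum_subset (Finset.filter_subset _ _)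
        intro x _ hx
        have hne : Λ₁ i x ≠ 1 := by simpa using hx
        rcases h₁.1 i x with h | h
        · simp [h]
        · exact absurd h hne
      simp_rw [hQ]
      rw [← Finset.sum_div, hsub, div_self hD₁pos.ne']
    have hPsum : (∑ j ∈ Finset.univ.filter (fun j => Λ₁ i j = 1),
        msoftmax (A + Ω • Λ₁) Λ₂ i j) = S := by
      rw [Finset.sum_congr rfl (fun j hj => hPeq j (by simpa using hj)),
        ← Finset.mul_sum, hQsum, mul_one]
    refine ⟨S, ⟨hSlb, hS1, hPsum, hPeq⟩, ?_⟩
    intro j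
    rcases h₁.1 i j with hj | hj
    · -- off-mask: Q = 0, P small
      have hQ0 : msoftmax A Λ₁ i j = 0 := by rw [hQ, hj]; simp
      rw [hQ0, sub_zero]
      have hPnn : 0 ≤ msoftmax (A + Ω • Λ₁) Λ₂ i j := by
        rw [hP]
        have h2j : 0 ≤ Λ₂ i j := le_trans (by rw [hj]) (hle i j)
        exact div_nonneg (mul_nonneg h2j (Real.exp_pos _).le) hD₂pos.le
      rw [abs_of_nonneg hPnn, hP]
      have hterm : Λ₂ i j * Real.exp ((A + Ω • Λ₁) i j) ≤ R := by
        rw [hentry, hj, mul_zero, add_zero, hRdef]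
        have := Finset.single_le_sum (f := fun k => (Λ₂ i k - Λ₁ i k) * Real.exp (A i k))
          (fun k _ => mul_nonneg (by linarith [hle i k]) (Real.exp_pos _).le)
          (Finset.mem_univ j)
        simpa [hj] using this
      calc Λ₂ i j * Real.exp ((A + Ω • Λ₁) i j) / D₂ ≤ R / D₂ := by gcongr
        _ ≤ ε₀ := hRDdiv
    · -- on-mask
      rw [hPeq j hj, hQ, hj, one_mul]
      have hQub : Real.exp (A i j) / D₁ ≤ 1 := by
        rw [div_le_one hD₁pos]
        have := Finset.single_le_sum htermnn (Finset.mem_univ j)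
        simpa [hj] using this
      have hQnn : 0 ≤ Real.exp (A i j) / D₁ := by positivity
      rw [← sub_one_mul, abs_mul, abs_of_nonneg hQnn, abs_of_nonpos (by linarith)]
      calc -(S - 1) * (Real.exp (A i j) / D₁) ≤ -(S - 1) * 1 := by
            apply mul_le_mul_of_nonneg_left hQub; linarith
        _ ≤ ε₀ := by nlinarith [h1S ▸ hRDdiv]
    
  exact ⟨fun i => (key i).imp (fun S hS => hS.1), fun i j => (key i).choose_spec.2 j⟩
end

section
/- Pseudo-masking limit: let h(X) = msoftmax(X W_QK Xᵀ, Λ₁) X W_OV be an attention head on M_{N,D} and Λ₂ ≥ Λ₁ another mask matrix. Define h_Ω on M_{N,D+N} by parameters W_QK ⊕ ΩΛ₁ and W_OV ⊕ 0 with mask Λ₂. Then for every compact K ⊂ M_{N,D}, h_Ω([X | I_N]) → [h(X) | 0] uniformly for X ∈ K as Ω → ∞. -/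
open Matrix

lemma exists_entry_bound {α : Type*} [TopologicalSpace α] {m n : Type*} [Fintype m] [Fintype n]
    {K : Set α} (hK : IsCompact K) (f : α → Matrix m n ℝ) (hf : Continuous f) :
    ∃ M : ℝ, 0 ≤ M ∧ ∀ X ∈ K, ∀ i j, |f X i j| ≤ M := by
  have h : ∀ p : m × n, ∃ C, ∀ X ∈ K, |f X p.1 p.2| ≤ C := by
    intro p
    obtain ⟨C, hC⟩ := hK.exists_bound_of_continuousOn (hf.matrix_elem p.1 p.2).continuousOn
    exact ⟨C, fun X hX => by simpa using hC X hX⟩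
  choose C hC using h
  refine ⟨∑ p : m × n, |C p|, Finset.sum_nonneg fun p _ => abs_nonneg _, fun X hX i j => ?_⟩
  calc |f X i j| ≤ C (i, j) := hC (i, j) X hX
    _ ≤ |C (i, j)| := le_abs_self _
    _ ≤ ∑ p : m × n, |C p| :=
        Finset.single_le_sum (f := fun p => |C p|) (fun p _ => abs_nonneg _) (Finset.mem_univ _)

lemma attn_block {N D : ℕ} (WQK WOV : Matrix (Fin D) (Fin D) ℝ) (Λ₁ Λ₂ : Matrix (Fin N) (Fin N) ℝ)
    (Ω : ℝ) (X : Matrix (Fin N) (Fin D) ℝ) :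
    attnHead (fromBlocks WQK 0 0 (Ω • Λ₁)) (fromBlocks WOV 0 0 0) Λ₂ (fromCols X 1) =
      fromCols (msoftmax (X * WQK * Xᵀ + Ω • Λ₁) Λ₂ * X * WOV) 0 := by
  unfold attnHead
  rw [transpose_fromCols, transpose_one, fromCols_mul_fromBlocks,
    fromCols_mul_fromRows]
  simp only [Matrix.mul_zero, Matrix.zero_mul, Matrix.one_mul, Matrix.mul_one, add_zero, zero_add]
  rw [Matrix.mul_assoc (msoftmax _ Λ₂), fromCols_mul_fromBlocks]
  simp only [Matrix.mul_zero, Matrix.one_mul, Matrix.zero_mul, add_zero, Matrix.mul_one]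
  rw [mul_fromCols]
  simp [Matrix.mul_assoc]

set_option maxHeartbeats 1000000 in
lemma msoftmax_pseudo_bound {N : ℕ} (Λ₁ Λ₂ : Matrix (Fin N) (Fin N) ℝ)
    (h₁ : IsMask Λ₁) (h₂ : IsMask Λ₂) (hle : ∀ i j, Λ₁ i j ≤ Λ₂ i j)
    (A : Matrix (Fin N) (Fin N) ℝ) (M : ℝ) (hM : ∀ i j, |A i j| ≤ M)
    (Ω : ℝ) (i j : Fin N) :
    |msoftmax (A + Ω • Λ₁) Λ₂ i j - msoftmax A Λ₁ i j| ≤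
      2 * N * Real.exp (4 * M) * Real.exp (-Ω) := by
  have hΛ₁0 : ∀ a b, 0 ≤ Λ₁ a b := fun a b => by rcases h₁.1 a b with h | h <;> simp [h]
  have hΛ₁1 : ∀ a b, Λ₁ a b ≤ 1 := fun a b => by rcases h₁.1 a b with h | h <;> simp [h]
  have hΛ₂1 : ∀ a b, Λ₂ a b ≤ 1 := fun a b => by rcases h₂.1 a b with h | h <;> simp [h]
  have hexpA : ∀ k, Real.exp (-M) ≤ Real.exp (A i k) ∧ Real.exp (A i k) ≤ Real.exp M := by
    intro k
    obtain ⟨hl, hr⟩ := abs_le.mp (hM i k)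
    exact ⟨Real.exp_le_exp.mpr (by linarith), Real.exp_le_exp.mpr hr⟩
  set P := ∑ k, Λ₁ i k * Real.exp (A i k) with hPdef
  set Q := ∑ k, (Λ₂ i k - Λ₁ i k) * Real.exp (A i k) with hQdef
  set n := Λ₁ i j * Real.exp (A i j) with hndef
  set q := (Λ₂ i j - Λ₁ i j) * Real.exp (A i j) with hqdef
  have key : ∀ k, Λ₂ i k * Real.exp ((A + Ω • Λ₁) i k) =
      Real.exp Ω * (Λ₁ i k * Real.exp (A i k)) + (Λ₂ i k - Λ₁ i k) * Real.exp (A i k) := by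
    intro k
    rcases h₁.1 i k with h | h
    · simp [h, Matrix.add_apply, Matrix.smul_apply, smul_eq_mul]
    · have h2 : Λ₂ i k = 1 := by
        rcases h₂.1 i k with h' | h'
        · exfalso; have := hle i k; rw [h, h'] at this; linarith
        · exact h'
      simp only [h, h2, Matrix.add_apply, Matrix.smul_apply, smul_eq_mul, mul_one,
        Real.exp_add, one_mul, sub_self, zero_mul, add_zero]
      ring
  have hden : ∑ k, Λ₂ i k * Real.exp ((A + Ω • Λ₁) i k) = Real.exp Ω * P + Q := by
    simp_rw [key]
    rw [Finset.sum_add_distrib, ← Finset.mul_sum]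
  have hP0 : Real.exp (-M) ≤ P := by
    obtain ⟨k0, hk0⟩ := h₁.2 i
    have h0 : Real.exp (-M) ≤ Λ₁ i k0 * Real.exp (A i k0) := by
      rw [hk0, one_mul]; exact (hexpA k0).1
    exact h0.trans (Finset.single_le_sum
      (fun k _ => mul_nonneg (hΛ₁0 i k) (Real.exp_pos _).le) (Finset.mem_univ k0))
  have hPpos : 0 < P := lt_of_lt_of_le (Real.exp_pos _) hP0
  have hPle : P ≤ N * Real.exp M := by
    calc P ≤ ∑ _k : Fin N, Real.exp M := Finset.sum_le_sum fun k _ => by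
          have := mul_le_mul (hΛ₁1 i k) (hexpA k).2 (Real.exp_pos _).le zero_le_one
          simpa using this
      _ = N * Real.exp M := by simp [mul_comm]
  have hQ0 : 0 ≤ Q := Finset.sum_nonneg fun k _ =>
    mul_nonneg (by linarith [hle i k]) (Real.exp_pos _).le
  have hQle : Q ≤ N * Real.exp M := by
    calc Q ≤ ∑ _k : Fin N, Real.exp M := Finset.sum_le_sum fun k _ => by
          have h5 : Λ₂ i k - Λ₁ i k ≤ 1 := by linarith [hΛ₂1 i k, hΛ₁0 i k]
          have := mul_le_mul h5 (hexpA k).2 (Real.exp_pos _).le zero_le_one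
          simpa using this
      _ = N * Real.exp M := by simp [mul_comm]
  have hn0 : 0 ≤ n := mul_nonneg (hΛ₁0 i j) (Real.exp_pos _).le
  have hnle : n ≤ Real.exp M := by
    have := mul_le_mul (hΛ₁1 i j) (hexpA j).2 (Real.exp_pos _).le zero_le_one
    simpa using this
  have hq0 : 0 ≤ q := mul_nonneg (by linarith [hle i j]) (Real.exp_pos _).le
  have hqle : q ≤ Real.exp M := by
    have h5 : Λ₂ i j - Λ₁ i j ≤ 1 := by linarith [hΛ₂1 i j, hΛ₁0 i j]
    have := mul_le_mul h5 (hexpA j).2 (Real.exp_pos _).le zero_le_one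
    simpa using this
  have hDpos : 0 < Real.exp Ω * P + Q := by positivity
  have hlhs : msoftmax (A + Ω • Λ₁) Λ₂ i j = (Real.exp Ω * n + q) / (Real.exp Ω * P + Q) := by
    simp only [msoftmax, Matrix.of_apply]
    rw [hden, key j]
  have hrhs : msoftmax A Λ₁ i j = n / P := rfl
  rw [hlhs, hrhs]
  have hdiff : (Real.exp Ω * n + q) / (Real.exp Ω * P + Q) - n / P =
      (P * q - n * Q) / (P * (Real.exp Ω * P + Q)) := by
    field_simp
    ring
  rw [hdiff, abs_div, abs_of_pos (mul_pos hPpos hDpos)]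
  have hnum : |P * q - n * Q| ≤ 2 * N * (Real.exp M * Real.exp M) := by
    have h1 : P * q ≤ N * Real.exp M * Real.exp M :=
      mul_le_mul hPle hqle hq0 (by positivity)
    have h2 : n * Q ≤ Real.exp M * (N * Real.exp M) :=
      mul_le_mul hnle hQle hQ0 (Real.exp_pos M).le
    have h3 : 0 ≤ P * q := by positivity
    have h4 : 0 ≤ n * Q := mul_nonneg hn0 hQ0
    rw [abs_sub_le_iff]
    constructor <;> nlinarith
  have hdenlb : Real.exp (-M) * (Real.exp Ω * Real.exp (-M)) ≤ P * (Real.exp Ω * P + Q) := by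
    have : Real.exp Ω * Real.exp (-M) ≤ Real.exp Ω * P + Q := by
      nlinarith [Real.exp_pos Ω, hP0, hQ0]
    nlinarith [Real.exp_pos (-M), Real.exp_pos Ω, hP0, hQ0, hPpos]
  calc |P * q - n * Q| / (P * (Real.exp Ω * P + Q))
      ≤ (2 * N * (Real.exp M * Real.exp M)) / (Real.exp (-M) * (Real.exp Ω * Real.exp (-M))) :=
        div_le_div₀ (by positivity) hnum (by positivity) hdenlb
    _ = 2 * N * Real.exp (4 * M) * Real.exp (-Ω) := by
        rw [show Real.exp M * Real.exp M = Real.exp (M + M) from (Real.exp_add M M).symm,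
          show Real.exp (-M) * (Real.exp Ω * Real.exp (-M)) = Real.exp (-M + (Ω + -M)) by
            rw [Real.exp_add, Real.exp_add],
          mul_div_assoc, ← Real.exp_sub,
          show M + M - (-M + (Ω + -M)) = 4 * M + -Ω by ring, Real.exp_add]
        ring

theorem pseudo_masking_limit {N D : ℕ}
    (WQK WOV : Matrix (Fin D) (Fin D) ℝ) (Λ₁ Λ₂ : Matrix (Fin N) (Fin N) ℝ)
    (h₁ : IsMask Λ₁) (h₂ : IsMask Λ₂) (hle : ∀ i j, Λ₁ i j ≤ Λ₂ i j)
    (K : Set (Matrix (Fin N) (Fin D) ℝ)) (hK : IsCompact K) :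
    ∀ ε : ℝ, 0 < ε → ∃ Ω₀ : ℝ, ∀ Ω : ℝ, Ω₀ ≤ Ω → ∀ X ∈ K, ∀ i j,
      |attnHead (fromBlocks WQK 0 0 (Ω • Λ₁)) (fromBlocks WOV 0 0 0) Λ₂
          (fromCols X (1 : Matrix (Fin N) (Fin N) ℝ)) i j -
        fromCols (attnHead WQK WOV Λ₁ X) (0 : Matrix (Fin N) (Fin N) ℝ) i j| ≤ ε := by
  intro ε hε
  obtain ⟨M, hM0, hM⟩ := exists_entry_bound hK (fun X => X * WQK * Xᵀ)
    ((continuous_id.matrix_mul continuous_const).matrix_mul continuous_id.matrix_transpose)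
  obtain ⟨B, hB0, hB⟩ := exists_entry_bound hK (fun X => X * WOV)
    (continuous_id.matrix_mul continuous_const)
  set C : ℝ := 2 * N ^ 2 * Real.exp (4 * M) * B + 1 with hCdef
  have hC0 : 0 ≤ 2 * (N:ℝ) ^ 2 * Real.exp (4 * M) * B := by positivity
  have hC1 : 1 ≤ C := by linarith
  have hCpos : 0 < C := by linarith
  refine ⟨Real.log (C / ε), fun Ω hΩ X hX i j => ?_⟩
  have hexp : Real.exp (-Ω) ≤ ε / C := by
    have h1 : Real.exp (-Ω) ≤ Real.exp (-(Real.log (C / ε))) :=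
      Real.exp_le_exp.mpr (by linarith)
    rwa [Real.exp_neg (Real.log (C / ε)), Real.exp_log (show (0:ℝ) < C / ε by positivity),
      inv_div] at h1
  rw [attn_block]
  cases j with
  | inr j =>
    rw [fromCols_apply_inr, fromCols_apply_inr]
    simpa using hε.le
  | inl j =>
    rw [fromCols_apply_inl, fromCols_apply_inl]
    have hSdiff : ∀ k, |msoftmax (X * WQK * Xᵀ + Ω • Λ₁) Λ₂ i k -
        msoftmax (X * WQK * Xᵀ) Λ₁ i k| ≤ 2 * N * Real.exp (4 * M) * Real.exp (-Ω) :=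
      fun k => msoftmax_pseudo_bound Λ₁ Λ₂ h₁ h₂ hle (X * WQK * Xᵀ) M (hM X hX) Ω i k
    have hentry : (msoftmax (X * WQK * Xᵀ + Ω • Λ₁) Λ₂ * X * WOV) i j
        - attnHead WQK WOV Λ₁ X i j =
        ∑ k, (msoftmax (X * WQK * Xᵀ + Ω • Λ₁) Λ₂ i k - msoftmax (X * WQK * Xᵀ) Λ₁ i k)
          * (X * WOV) k j := by
      simp only [attnHead]
      rw [Matrix.mul_assoc (msoftmax (X * WQK * Xᵀ + Ω • Λ₁) Λ₂),
        Matrix.mul_assoc (msoftmax (X * WQK * Xᵀ) Λ₁), Matrix.mul_apply, Matrix.mul_apply,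
        ← Finset.sum_sub_distrib]
      exact Finset.sum_congr rfl fun k _ => (sub_mul _ _ _).symm
    rw [hentry]
    calc |∑ k, (msoftmax (X * WQK * Xᵀ + Ω • Λ₁) Λ₂ i k - msoftmax (X * WQK * Xᵀ) Λ₁ i k)
          * (X * WOV) k j|
        ≤ ∑ k, |(msoftmax (X * WQK * Xᵀ + Ω • Λ₁) Λ₂ i k - msoftmax (X * WQK * Xᵀ) Λ₁ i k)
          * (X * WOV) k j| := Finset.abs_sum_le_sum_abs _ _
      _ ≤ ∑ _k : Fin N, (2 * N * Real.exp (4 * M) * Real.exp (-Ω)) * B :=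
          Finset.sum_le_sum fun k _ => by
            rw [abs_mul]
            exact mul_le_mul (hSdiff k) (hB X hX k j) (abs_nonneg _) (by positivity)
      _ = N * ((2 * N * Real.exp (4 * M) * Real.exp (-Ω)) * B) := by
          simp [mul_comm]
      _ ≤ ε := by
          have h2 : (N:ℝ) * ((2 * N * Real.exp (4 * M) * Real.exp (-Ω)) * B) =
              (2 * N ^ 2 * Real.exp (4 * M) * B) * Real.exp (-Ω) := by ring
          rw [h2]
          have h3 : (2 * (N:ℝ) ^ 2 * Real.exp (4 * M) * B) * Real.exp (-Ω) ≤
              (C - 1) * (ε / C) := by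
            have hc : C - 1 = 2 * (N:ℝ) ^ 2 * Real.exp (4 * M) * B := by rw [hCdef]; ring
            rw [hc]
            exact mul_le_mul_of_nonneg_left hexp hC0
          have h5 : (C - 1) * (ε / C) = ε - ε / C := by field_simp
          have h6 : 0 < ε / C := div_pos hε hCpos
          linarith
end
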